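/- arXiv:2304.13323 — 10 statements merged into one kernel-verified Lean document; each statement's English description precedes it below -/
import Mathlib

section
/- Let R be a commutative ring, σ a finite type, and let f be a formal power series in X with coefficients in the multivariate polynomial ring R[y_i : i ∈ σ]. Suppose f is regular in y and its constant coefficient f₀ equals 1. Then f is a unit, and its inverse f⁻¹ is also regular in y: for every n, the total degree in the y-variables of the n-th coefficient of f⁻¹ is at most n. -/
/-- If `f` is a formal power series in `X` with coefficients in
`R[yᵢ : i ∈ σ]` (σ finite) which is regular in `y` and has constant coefficient `1`, then
`f` is a unit and its inverse is also regular in `y`. -/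
theorem totalDegree_coeff_inverse_le {R : Type*} [CommRing R] {σ : Type*} [Fintype σ]
    (f : PowerSeries (MvPolynomial σ R))
    (hf : ∀ n : ℕ, (PowerSeries.coeff n f).totalDegree ≤ n)
    (h0 : PowerSeries.constantCoeff f = 1) :
    IsUnit f ∧
      ∀ n : ℕ,
        (PowerSeries.coeff n (Ring.inverse f)).totalDegree ≤ n := by
  set g := PowerSeries.invOfUnit f 1 with hg
  have hmul : f * g = 1 := PowerSeries.mul_invOfUnit f 1 (by simpa using h0)
  have hunit : IsUnit f := IsUnit.of_mul_eq_one g hmul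
  have hinv : Ring.inverse f = g := by
    calc Ring.inverse f = Ring.inverse f * (f * g) := by rw [hmul, mul_one]
    _ = (Ring.inverse f * f) * g := by ring
    _ = g := by rw [Ring.inverse_mul_cancel f hunit, one_mul]
  refine ⟨hunit, ?_⟩
  rw [hinv]
  intro n
  induction n using Nat.strong_induction_on with
  | _ n ih =>
    rw [hg, PowerSeries.coeff_invOfUnit]
    split
    · simp
    · refine le_trans (MvPolynomial.totalDegree_mul _ _) ?_
      have h1 : (-((1 : (MvPolynomial σ R)ˣ)⁻¹ : (MvPolynomial σ R)ˣ) :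
          MvPolynomial σ R).totalDegree = 0 := by simp
      rw [h1, zero_add]
      refine MvPolynomial.totalDegree_finsetSum_le ?_
      rintro ⟨i, j⟩ hij
      replace hij : i + j = n := by simpa using hij
      split
      · rename_i hj
        refine le_trans (MvPolynomial.totalDegree_mul _ _) ?_
        have h2 := ih j (by omega)
        have h3 := hf i
        simp only [← hg]
        simp only at hij hj
        omega
      · simp
end

section
/- Let R be a commutative ℚ-algebra, σ a finite type, and let h be a formal power series in X with coefficients in R[y_i : i ∈ σ] such that h has zero constant coefficient and h is regular in y. Then f = exp(h) is also regular in y: for every n, the total degree in the y-variables of the n-th coefficient of exp(h) is at most n. -/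
/-- Substitution of a power series `h` with zero constant coefficient into the exponential
series `exp = ∑_{k≥0} Xᵏ/k!`.  Since `h` has zero constant term, the coefficient of `Xⁿ` in
`exp(h)` only receives contributions from `hᵏ` with `k ≤ n`, so the finite sum below computes
the substitution exactly. -/
noncomputable def expSubst {R : Type*} [CommRing R] [Algebra ℚ R] (h : PowerSeries R) :
    PowerSeries R :=
  PowerSeries.mk fun n => ∑ k ∈ Finset.range (n + 1),
    algebraMap ℚ R (1 / k.factorial) * PowerSeries.coeff n (h ^ k)

/-- Let `R` be a commutative `ℚ`-algebra and `σ` a finite type.  If `h` is a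
formal power series in `X` with coefficients in `R[yᵢ : i ∈ σ]`, with zero constant
coefficient and regular in `y`, then `exp(h)` is also regular in `y`. -/
theorem totalDegree_coeff_expSubst_le {R : Type*} [CommRing R] [Algebra ℚ R]
    {σ : Type*} [Fintype σ]
    (h : PowerSeries (MvPolynomial σ R))
    (h0 : PowerSeries.constantCoeff h = 0)
    (hreg : ∀ n : ℕ, (PowerSeries.coeff n h).totalDegree ≤ n) :
    ∀ n : ℕ,
      (PowerSeries.coeff n (expSubst h)).totalDegree ≤ n := by
  intro n
  simp only [expSubst, PowerSeries.coeff_mk]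
  refine le_trans (MvPolynomial.totalDegree_finset_sum _ _) ?_
  apply Finset.sup_le
  intro k _
  refine le_trans (MvPolynomial.totalDegree_mul _ _) ?_
  have hc : (algebraMap ℚ (MvPolynomial σ R) (1 / k.factorial)).totalDegree = 0 := by
    rw [IsScalarTower.algebraMap_apply ℚ R (MvPolynomial σ R), MvPolynomial.algebraMap_eq]
    exact MvPolynomial.totalDegree_C _
  rw [hc, zero_add]
  -- bound totalDegree of coeff n (h^k)
  rw [PowerSeries.coeff_pow]
  refine le_trans (MvPolynomial.totalDegree_finset_sum _ _) ?_
  apply Finset.sup_le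
  intro l hl
  refine le_trans (MvPolynomial.totalDegree_finset_prod _ _) ?_
  rw [Finset.mem_finsuppAntidiag] at hl
  calc ∑ i ∈ Finset.range k, (PowerSeries.coeff (l i) h).totalDegree
      ≤ ∑ i ∈ Finset.range k, l i := Finset.sum_le_sum fun i _ => hreg (l i)
    _ = n := by
        rw [← hl.1]
end

section
/- Let R be a commutative ℚ-algebra, σ a finite type, and let f, h be formal power series in X with coefficients in R[y_i : i ∈ σ] such that h has zero constant coefficient, f = exp(h), f has constant coefficient 1, and f is regular in y. Then h is regular in y: for every n, the total degree in the y-variables of the n-th coefficient of h is at most n. -/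
private lemma totalDegree_coeff_pow_le {R : Type*} [CommRing R] [Algebra ℚ R]
    {σ : Type*} [Fintype σ] (h : PowerSeries (MvPolynomial σ R))
    (h0 : PowerSeries.constantCoeff h = 0)
    {n : ℕ} (IH : ∀ m < n, (PowerSeries.coeff m h).totalDegree ≤ m)
    {k : ℕ} (hk : 2 ≤ k) :
    (PowerSeries.coeff n (h ^ k)).totalDegree ≤ n := by
  rw [PowerSeries.coeff_pow]
  apply MvPolynomial.totalDegree_finsetSum_le
  intro l hl
  rw [Finset.mem_finsuppAntidiag] at hl
  by_cases hz : ∃ i ∈ Finset.range k, l i = 0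
  · obtain ⟨i, hi, hli⟩ := hz
    have : (PowerSeries.coeff (l i)) h = 0 := by
      rw [hli, PowerSeries.coeff_zero_eq_constantCoeff, h0]
    rw [Finset.prod_eq_zero hi this]
    simp
  · push_neg at hz
    have hlt : ∀ i ∈ Finset.range k, l i < n := by
      intro i hi
      -- pick another index j ∈ range k
      obtain ⟨j, hj, hji⟩ : ∃ j ∈ Finset.range k, j ≠ i := by
        rcases Nat.lt_or_ge i 1 with hi1 | hi1
        · exact ⟨1, Finset.mem_range.mpr hk, by omega⟩
        · exact ⟨0, Finset.mem_range.mpr (by omega), by omega⟩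
      have hlj : 1 ≤ l j := Nat.one_le_iff_ne_zero.mpr (hz j hj)
      have hsub : l i + l j ≤ ∑ m ∈ Finset.range k, l m := by
        have : ({i, j} : Finset ℕ) ⊆ Finset.range k := by
          intro x hx
          simp only [Finset.mem_insert, Finset.mem_singleton] at hx
          rcases hx with rfl | rfl <;> assumption
        calc l i + l j = ∑ m ∈ ({i, j} : Finset ℕ), l m :=
              (Finset.sum_pair hji.symm).symm
          _ ≤ _ := Finset.sum_le_sum_of_subset this
      have hsum : ∑ m ∈ Finset.range k, l m = n := hl.1
      omega
    calc (∏ i ∈ Finset.range k,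
          (PowerSeries.coeff (l i)) h).totalDegree
        ≤ ∑ i ∈ Finset.range k,
            ((PowerSeries.coeff (l i)) h).totalDegree :=
          MvPolynomial.totalDegree_finset_prod _ _
      _ ≤ ∑ i ∈ Finset.range k, l i :=
          Finset.sum_le_sum fun i hi => IH (l i) (hlt i hi)
      _ = n := hl.1

/-- Let `R` be a commutative `ℚ`-algebra and `σ` a finite type.  If `h` is a
formal power series in `X` with coefficients in `R[yᵢ : i ∈ σ]` with zero constant
coefficient, `f = exp(h)` has constant coefficient `1` and `f` is regular in `y`, then `h`
is regular in `y`. -/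
theorem totalDegree_coeff_log_le {R : Type*} [CommRing R] [Algebra ℚ R]
    {σ : Type*} [Fintype σ]
    (f h : PowerSeries (MvPolynomial σ R))
    (h0 : PowerSeries.constantCoeff h = 0)
    (hf : f = expSubst h)
    (hf0 : PowerSeries.constantCoeff f = 1)
    (hreg : ∀ n : ℕ, (PowerSeries.coeff n f).totalDegree ≤ n) :
    ∀ n : ℕ, (PowerSeries.coeff n h).totalDegree ≤ n := by
  intro n
  induction n using Nat.strong_induction_on with
  | _ n IH =>
    rcases Nat.eq_zero_or_pos n with rfl | hn
    · rw [PowerSeries.coeff_zero_eq_constantCoeff, h0]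
      simp
    -- expand the equation f = expSubst h at coefficient n
    have key : PowerSeries.coeff n f =
        ∑ k ∈ Finset.range (n + 1),
          algebraMap ℚ (MvPolynomial σ R) (1 / k.factorial) *
            PowerSeries.coeff n (h ^ k) := by
      rw [hf, expSubst, PowerSeries.coeff_mk]
    have hsplit : Finset.range (n + 1) = {0, 1} ∪ Finset.Ico 2 (n + 1) := by
      ext x
      simp only [Finset.mem_range, Finset.mem_union, Finset.mem_insert,
        Finset.mem_singleton, Finset.mem_Ico]
      omega
    have hdisj : Disjoint ({0, 1} : Finset ℕ) (Finset.Ico 2 (n + 1)) := by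
      simp [Finset.disjoint_left]
    rw [hsplit, Finset.sum_union hdisj] at key
    have h01 : ∑ k ∈ ({0, 1} : Finset ℕ),
        algebraMap ℚ (MvPolynomial σ R) (1 / k.factorial) *
          PowerSeries.coeff n (h ^ k) =
        PowerSeries.coeff n h := by
      rw [Finset.sum_pair (by norm_num : (0 : ℕ) ≠ 1)]
      simp [PowerSeries.coeff_one, hn.ne', Nat.factorial]
    rw [h01] at key
    have heq : PowerSeries.coeff n h =
        PowerSeries.coeff n f -
          ∑ k ∈ Finset.Ico 2 (n + 1),
            algebraMap ℚ (MvPolynomial σ R) (1 / k.factorial) *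
              PowerSeries.coeff n (h ^ k) := by
      rw [key]; ring
    rw [heq]
    refine le_trans (MvPolynomial.totalDegree_sub _ _) (max_le (hreg n) ?_)
    apply MvPolynomial.totalDegree_finsetSum_le
    intro k hk
    rw [Finset.mem_Ico] at hk
    calc (algebraMap ℚ (MvPolynomial σ R) (1 / k.factorial) *
            PowerSeries.coeff n (h ^ k)).totalDegree
        ≤ (algebraMap ℚ (MvPolynomial σ R) (1 / k.factorial)).totalDegree +
            (PowerSeries.coeff n (h ^ k)).totalDegree :=
          MvPolynomial.totalDegree_mul _ _
      _ ≤ 0 + n := by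
          refine add_le_add ?_ (totalDegree_coeff_pow_le h h0 IH hk.1)
          rw [IsScalarTower.algebraMap_apply ℚ R (MvPolynomial σ R)]
          exact le_of_eq (MvPolynomial.totalDegree_C _)
      _ = n := zero_add n
end

section
/- Let R be a commutative ℚ-algebra, m ≥ 1, and let ψ ∈ R[[X]] be a power series with zero constant coefficient such that X^m divides ψ. Then X^{2m} divides exp(ψ)·(1 − ψ) − 1. (This is the order-doubling estimate underlying the Newton iteration φ_i = φ_{i−1}(1 − ln φ_{i−1} + h) for computing exp(h): if φ_{i−1} = exp(h + ψ) with X^m ∣ ψ, then φ_{i−1}(1 − ψ) agrees with exp(h) modulo X^{2m}.) -/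
/-- Order-doubling estimate for the Newton iteration computing `exp`:
if `ψ` has zero constant coefficient and `X^m ∣ ψ` with `m ≥ 1`, then
`X^{2m} ∣ exp(ψ)·(1 − ψ) − 1`. -/
theorem newton_exp_order_doubling {R : Type*} [CommRing R] [Algebra ℚ R]
    (m : ℕ) (hm : 1 ≤ m) (ψ : PowerSeries R)
    (h0 : PowerSeries.constantCoeff ψ = 0)
    (hdvd : (PowerSeries.X : PowerSeries R) ^ m ∣ ψ) :
    (PowerSeries.X : PowerSeries R) ^ (2 * m) ∣ expSubst ψ * (1 - ψ) - 1 := by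
  have hψ2 : (PowerSeries.X : PowerSeries R) ^ (2 * m) ∣ ψ ^ 2 := by
    have := pow_dvd_pow_of_dvd hdvd 2
    rwa [← pow_mul, mul_comm m 2] at this
  have key : (PowerSeries.X : PowerSeries R) ^ (2 * m) ∣ expSubst ψ - (1 + ψ) := by
    rw [PowerSeries.X_pow_dvd_iff]
    intro n hn
    have hzero : ∀ k, 2 ≤ k → PowerSeries.coeff n (ψ ^ k) = 0 := by
      intro k hk
      have hd : (PowerSeries.X : PowerSeries R) ^ (k * m) ∣ ψ ^ k := by
        have := pow_dvd_pow_of_dvd hdvd k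
        rwa [← pow_mul, mul_comm m k] at this
      rw [PowerSeries.X_pow_dvd_iff] at hd
      exact hd n (lt_of_lt_of_le hn (by nlinarith))
    have hsum : (∑ k ∈ Finset.range (n + 1),
        algebraMap ℚ R (1 / k.factorial) * PowerSeries.coeff n (ψ ^ k))
        = ∑ k ∈ Finset.range (min (n + 1) 2),
        algebraMap ℚ R (1 / k.factorial) * PowerSeries.coeff n (ψ ^ k) := by
      refine (Finset.sum_subset ?_ ?_).symm
      · exact Finset.range_subset_range.2 (min_le_left _ _)
      · intro k hk hk2
        have : 2 ≤ k := by
          simp only [Finset.mem_range, lt_min_iff, not_and, not_lt] at hk2 hk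
          exact hk2 hk
        rw [hzero k this, mul_zero]
    rcases n with _ | n'
    · simp [expSubst, hsum, h0, PowerSeries.coeff_zero_eq_constantCoeff]
    · have h2 : min (n' + 1 + 1) 2 = 2 := by omega
      simp only [map_sub, map_add, expSubst, PowerSeries.coeff_mk, hsum, h2]
      rw [Finset.sum_range_succ, Finset.sum_range_one]
      simp [PowerSeries.coeff_one]
  have hrw : expSubst ψ * (1 - ψ) - 1 =
      (expSubst ψ - (1 + ψ)) * (1 - ψ) - ψ ^ 2 := by ring
  rw [hrw]
  exact dvd_sub (key.mul_right _) hψ2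
end

section
/- Let R be a commutative ring, let d ≥ 1 and r ≥ 1 be integers, and let σ : R[y₁,…,y_r] → R[Y] be the R-algebra homomorphism with σ(y_j) = Y^{d^{j−1}} for j = 1,…,r (the Kronecker substitution). For a family f = (f₀, f₁, …, f_{d−1}) of polynomials fᵢ ∈ R[y₁,…,y_r] with total degree of fᵢ at most i for each i, define Φ(f) = Σ_{i=0}^{d−1} σ(fᵢ)·Y^{i·d^r} ∈ R[Y]. Then Φ is injective: if f and g are two such families with Φ(f) = Φ(g), then fᵢ = gᵢ for all i = 0,…,d−1. -/
open Polynomial Finset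

/-- Kronecker encoding of an exponent vector. -/
private def kEnc {r : ℕ} (d : ℕ) (a : Fin r →₀ ℕ) : ℕ := ∑ j : Fin r, a j * d ^ (j : ℕ)

private lemma coord_le_sum {r : ℕ} (a : Fin r →₀ ℕ) (j : Fin r) :
    a j ≤ a.sum fun _ e => e := by
  by_cases hj : j ∈ a.support
  · exact Finset.single_le_sum (fun _ _ => Nat.zero_le _) hj
  · simp [Finsupp.notMem_support_iff.mp hj]

private lemma kEnc_lt {d r : ℕ} (hd : 1 ≤ d) {a : Fin r →₀ ℕ} (ha : ∀ j, a j < d) :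
    kEnc d a < d ^ r := by
  have h := (finFunctionFinEquiv (fun j : Fin r => (⟨a j, ha j⟩ : Fin d))).isLt
  rw [finFunctionFinEquiv_apply] at h
  simpa [kEnc] using h

private lemma kEnc_inj {d r : ℕ} {a b : Fin r →₀ ℕ} (ha : ∀ j, a j < d) (hb : ∀ j, b j < d)
    (h : kEnc d a = kEnc d b) : a = b := by
  have h2 : finFunctionFinEquiv (fun j : Fin r => (⟨a j, ha j⟩ : Fin d)) =
      finFunctionFinEquiv (fun j : Fin r => (⟨b j, hb j⟩ : Fin d)) := by
    apply Fin.ext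
    rw [finFunctionFinEquiv_apply, finFunctionFinEquiv_apply]
    simpa [kEnc] using h
  have h3 := finFunctionFinEquiv.injective h2
  ext j
  exact congrArg Fin.val (congrFun h3 j)

private lemma aeval_eq_sum {R : Type*} [CommRing R] {d r : ℕ} (p : MvPolynomial (Fin r) R) :
    MvPolynomial.aeval (fun j : Fin r => (X : Polynomial R) ^ d ^ (j : ℕ)) p
      = ∑ a ∈ p.support, Polynomial.C (p.coeff a) * X ^ kEnc d a := by
  conv_lhs => rw [p.as_sum]
  rw [map_sum]
  refine Finset.sum_congr rfl fun a _ => ?_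
  rw [MvPolynomial.aeval_monomial]
  congr 1
  rw [Finsupp.prod]
  simp_rw [← pow_mul]
  rw [Finset.prod_pow_eq_pow_sum]
  congr 1
  rw [kEnc, Finset.sum_subset (Finset.subset_univ a.support) ?_]
  · exact Finset.sum_congr rfl fun j _ => mul_comm _ _
  · intro j _ hj
    simp [Finsupp.notMem_support_iff.mp hj]

private lemma coeff_key {R : Type*} [CommRing R] {d r : ℕ} (hd : 1 ≤ d)
    (F : Fin d → MvPolynomial (Fin r) R)
    (hF : ∀ i, (F i).totalDegree ≤ (i : ℕ)) (i₀ : Fin d) (a₀ : Fin r →₀ ℕ)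
    (ha₀ : ∀ j, a₀ j < d) :
    (∑ i : Fin d, MvPolynomial.aeval (fun j : Fin r => (X : Polynomial R) ^ d ^ (j : ℕ)) (F i)
        * X ^ ((i : ℕ) * d ^ r)).coeff (kEnc d a₀ + (i₀ : ℕ) * d ^ r)
      = (F i₀).coeff a₀ := by
  have hbound : ∀ i : Fin d, ∀ a ∈ (F i).support, ∀ j, a j < d := by
    intro i a ha j
    calc a j ≤ a.sum fun _ e => e := coord_le_sum a j
      _ ≤ (F i).totalDegree := MvPolynomial.le_totalDegree ha
      _ ≤ (i : ℕ) := hF i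
      _ < d := i.isLt
  have hdr : 0 < d ^ r := Nat.pow_pos hd
  have hcond : ∀ i : Fin d, ∀ a ∈ (F i).support,
      (kEnc d a₀ + (i₀ : ℕ) * d ^ r = kEnc d a + (i : ℕ) * d ^ r) ↔ (i = i₀ ∧ a = a₀) := by
    intro i a ha
    constructor
    · intro h
      have hlt : kEnc d a < d ^ r := kEnc_lt hd (hbound i a ha)
      have hlt₀ : kEnc d a₀ < d ^ r := kEnc_lt hd ha₀
      have hmod := congrArg (· % d ^ r) h
      simp only [Nat.add_mul_mod_self_right, Nat.mod_eq_of_lt hlt, Nat.mod_eq_of_lt hlt₀] at hmod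
      have hi : (i : ℕ) = (i₀ : ℕ) := by
        have : (i₀ : ℕ) * d ^ r = (i : ℕ) * d ^ r := by omega
        exact (Nat.eq_of_mul_eq_mul_right hdr this).symm
      exact ⟨Fin.ext hi, (kEnc_inj (hbound i a ha) ha₀ hmod.symm)⟩
    · rintro ⟨rfl, rfl⟩
      rfl
  simp_rw [aeval_eq_sum, Finset.sum_mul, mul_assoc, ← pow_add, Polynomial.finset_sum_coeff,
    Polynomial.coeff_C_mul, Polynomial.coeff_X_pow, mul_ite, mul_one, mul_zero]
  have hinner : ∀ i : Fin d, (∑ a ∈ (F i).support,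
      if kEnc d a₀ + (i₀ : ℕ) * d ^ r = kEnc d a + (i : ℕ) * d ^ r then (F i).coeff a else 0)
      = if i = i₀ then (F i₀).coeff a₀ else 0 := by
    intro i
    rw [Finset.sum_congr rfl fun a ha => if_congr (hcond i a ha) rfl rfl]
    by_cases hi : i = i₀
    · subst hi
      simp only [true_and, if_pos rfl]
      rw [Finset.sum_ite_eq' (F i).support a₀ (F i).coeff]
      by_cases hmem : a₀ ∈ (F i).support
      · simp [if_pos hmem]
      · rw [if_neg hmem, (MvPolynomial.notMem_support_iff.mp hmem).symm]
        simp
    · rw [if_neg hi]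
      refine Finset.sum_eq_zero fun a _ => ?_
      simp [hi]
  rw [Finset.sum_congr rfl fun i _ => hinner i]
  simp

/-- Injectivity of the Kronecker substitution.  Let `σ` be the `R`-algebra
map `R[y₁,…,y_r] → R[Y]` sending `y_j ↦ Y^{d^{j-1}}`, and for a family
`f = (f₀,…,f_{d-1})` of polynomials with `totalDegree fᵢ ≤ i` set
`Φ(f) = ∑_{i<d} σ(fᵢ)·Y^{i·d^r}`.  Then `Φ(f) = Φ(g)` forces `fᵢ = gᵢ` for all `i`. -/
theorem kronecker_substitution_injective {R : Type*} [CommRing R]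
    (d r : ℕ) (hd : 1 ≤ d) (hr : 1 ≤ r)
    (f g : Fin d → MvPolynomial (Fin r) R)
    (hf : ∀ i : Fin d, (f i).totalDegree ≤ (i : ℕ))
    (hg : ∀ i : Fin d, (g i).totalDegree ≤ (i : ℕ))
    (heq :
      ∑ i : Fin d,
          MvPolynomial.aeval
              (fun j : Fin r => (Polynomial.X : Polynomial R) ^ d ^ (j : ℕ)) (f i) *
            Polynomial.X ^ ((i : ℕ) * d ^ r) =
        ∑ i : Fin d,
          MvPolynomial.aeval
              (fun j : Fin r => (Polynomial.X : Polynomial R) ^ d ^ (j : ℕ)) (g i) *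
            Polynomial.X ^ ((i : ℕ) * d ^ r)) :
    ∀ i : Fin d, f i = g i := by
  intro i₀
  apply MvPolynomial.ext
  intro a₀
  by_cases ha₀ : ∀ j, a₀ j < d
  · have h1 := coeff_key hd f hf i₀ a₀ ha₀
    have h2 := coeff_key hd g hg i₀ a₀ ha₀
    rw [← h1, ← h2, heq]
  · push_neg at ha₀
    obtain ⟨j, hj⟩ := ha₀
    have key : ∀ p : MvPolynomial (Fin r) R, p.totalDegree ≤ (i₀ : ℕ) → p.coeff a₀ = 0 := by
      intro p hp
      by_contra hne
      have hmem : a₀ ∈ p.support := MvPolynomial.mem_support_iff.mpr hne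
      have h1 : a₀ j ≤ p.totalDegree :=
        le_trans (coord_le_sum a₀ j) (MvPolynomial.le_totalDegree hmem)
      have h2 : (i₀ : ℕ) < d := i₀.isLt
      omega
    rw [key (f i₀) (hf i₀), key (g i₀) (hg i₀)]
end

section
/- Let R be a commutative ℚ-algebra, let h ∈ R[[X]] have zero constant coefficient and set f = exp(h). Let b₁, …, b_k ∈ R with power sums p_n = b₁ⁿ + ⋯ + b_kⁿ. Then ∏_{i=1}^{k} f(bᵢ·X) = exp(H), where f(bᵢ·X) denotes the rescaling of f by bᵢ (replacing X by bᵢX) and H is the power series whose coefficient of Xⁿ is p_n·hₙ for every n ≥ 1 and whose constant coefficient is 0. -/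
section Aux
open PowerSeries Finset
variable {R : Type*} [CommRing R] [Algebra ℚ R]
set_option linter.unusedSectionVars false

lemma coeff_pow_eq_zero' {a : PowerSeries R} (ha : PowerSeries.constantCoeff a = 0)
    {n j : ℕ} (hnj : n < j) : PowerSeries.coeff n (a ^ j) = 0 := by
  have : (PowerSeries.X : PowerSeries R) ^ j ∣ a ^ j :=
    pow_dvd_pow_of_dvd (PowerSeries.X_dvd_iff.mpr ha) j
  exact (PowerSeries.X_pow_dvd_iff.mp this) n hnj

lemma coeff_mul_pow_eq_zero' {a b : PowerSeries R} (ha : PowerSeries.constantCoeff a = 0)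
    (hb : PowerSeries.constantCoeff b = 0) {n j l : ℕ} (hn : n < j + l) :
    PowerSeries.coeff n (a ^ j * b ^ l) = 0 := by
  have : (PowerSeries.X : PowerSeries R) ^ (j + l) ∣ a ^ j * b ^ l := by
    rw [pow_add]
    exact mul_dvd_mul (pow_dvd_pow_of_dvd (PowerSeries.X_dvd_iff.mpr ha) j)
      (pow_dvd_pow_of_dvd (PowerSeries.X_dvd_iff.mpr hb) l)
  exact (PowerSeries.X_pow_dvd_iff.mp this) n hn

lemma factorial_key (j k : ℕ) (h : j ≤ k) :
    algebraMap ℚ R (1 / k.factorial) * (k.choose j : R) =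
      algebraMap ℚ R (1 / j.factorial) * algebraMap ℚ R (1 / (k - j).factorial) := by
  have hq : (1 / k.factorial : ℚ) * (k.choose j) =
      (1 / j.factorial) * (1 / (k - j).factorial) := by
    have hnat := Nat.choose_mul_factorial_mul_factorial h
    have h1 : (k.factorial : ℚ) ≠ 0 := by exact_mod_cast k.factorial_ne_zero
    have h2 : (j.factorial : ℚ) ≠ 0 := by exact_mod_cast j.factorial_ne_zero
    have h3 : ((k - j).factorial : ℚ) ≠ 0 := by exact_mod_cast (k - j).factorial_ne_zero
    field_simp
    push_cast [← hnat]; ring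
  calc algebraMap ℚ R (1 / k.factorial) * (k.choose j : R)
      = algebraMap ℚ R ((1 / k.factorial) * (k.choose j)) := by
        rw [map_mul, map_natCast]
    _ = _ := by rw [hq, map_mul]

set_option linter.unusedSectionVars false

lemma expSubst_add (a b : PowerSeries R) (ha : PowerSeries.constantCoeff a = 0)
    (hb : PowerSeries.constantCoeff b = 0) :
    expSubst (a + b) = expSubst a * expSubst b := by
  ext n
  set c : ℕ → R := fun j => algebraMap ℚ R (1 / j.factorial) with hc
  set F : ℕ × ℕ → R := fun p =>
    c p.1 * c p.2 * PowerSeries.coeff n (a ^ p.1 * b ^ p.2) with hF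
  -- RHS
  have hrhs : PowerSeries.coeff n (expSubst a * expSubst b)
      = ∑ p ∈ Finset.range (n+1) ×ˢ Finset.range (n+1), F p := by
    rw [PowerSeries.coeff_mul]
    have step : ∀ p ∈ Finset.HasAntidiagonal.antidiagonal n,
        PowerSeries.coeff p.1 (expSubst a) * PowerSeries.coeff p.2 (expSubst b)
        = ∑ j ∈ Finset.range (n+1), ∑ l ∈ Finset.range (n+1),
            c j * c l * (PowerSeries.coeff p.1 (a ^ j) * PowerSeries.coeff p.2 (b ^ l)) := by
      intro p hp
      rw [Finset.HasAntidiagonal.mem_antidiagonal] at hp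
      have hp1 : p.1 ≤ n := le_of_add_le_left hp.le
      have hp2 : p.2 ≤ n := le_of_add_le_right hp.le
      have e1 : PowerSeries.coeff p.1 (expSubst a)
          = ∑ j ∈ Finset.range (n+1), c j * PowerSeries.coeff p.1 (a ^ j) := by
        rw [expSubst, PowerSeries.coeff_mk]
        refine Finset.sum_subset (by
          intro x hx; simp only [Finset.mem_range] at *; omega) ?_
        intro x hx hx'
        simp only [Finset.mem_range, not_lt] at hx'
        rw [coeff_pow_eq_zero' ha (by omega), mul_zero]
      have e2 : PowerSeries.coeff p.2 (expSubst b)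
          = ∑ l ∈ Finset.range (n+1), c l * PowerSeries.coeff p.2 (b ^ l) := by
        rw [expSubst, PowerSeries.coeff_mk]
        refine Finset.sum_subset (by
          intro x hx; simp only [Finset.mem_range] at *; omega) ?_
        intro x hx hx'
        simp only [Finset.mem_range, not_lt] at hx'
        rw [coeff_pow_eq_zero' hb (by omega), mul_zero]
      rw [e1, e2, Finset.sum_mul_sum]
      exact Finset.sum_congr rfl fun j _ => Finset.sum_congr rfl fun l _ => by ring
    rw [Finset.sum_congr rfl step, Finset.sum_comm]
    rw [Finset.sum_product]
    refine Finset.sum_congr rfl fun j _ => ?_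
    rw [Finset.sum_comm]
    refine Finset.sum_congr rfl fun l _ => ?_
    simp only [hF]
    rw [← Finset.mul_sum, ← PowerSeries.coeff_mul]
  -- LHS
  have hlhs : PowerSeries.coeff n (expSubst (a + b))
      = ∑ x ∈ (Finset.range (n+1)).sigma (fun k => Finset.HasAntidiagonal.antidiagonal k), F x.2 := by
    rw [expSubst, PowerSeries.coeff_mk, Finset.sum_sigma]
    refine Finset.sum_congr rfl fun k hk => ?_
    rw [add_pow]
    rw [map_sum, Finset.mul_sum]
    rw [Finset.Nat.sum_antidiagonal_eq_sum_range_succ_mk]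
    refine Finset.sum_congr rfl fun j hj => ?_
    simp only [Finset.mem_range, Nat.lt_succ_iff] at hj
    simp only [hF]
    rw [← map_natCast (PowerSeries.C) (k.choose j), PowerSeries.coeff_mul_C]
    have := factorial_key (R := R) j k hj
    calc algebraMap ℚ R (1 / k.factorial)
          * (PowerSeries.coeff n (a ^ j * b ^ (k - j)) * (k.choose j : R))
        = (algebraMap ℚ R (1 / k.factorial) * (k.choose j : R))
          * PowerSeries.coeff n (a ^ j * b ^ (k - j)) := by ring
      _ = _ := by rw [this]
  rw [hlhs, hrhs]
  -- both sides equal sum over the filtered square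
  have key : ∀ (s : Finset (ℕ × ℕ)), (∀ p, p ∈ s ↔ p ∈ (Finset.range (n+1) ×ˢ Finset.range (n+1)) ∧ p.1 + p.2 ≤ n) → True := fun _ _ => trivial
  rw [← Finset.sum_filter_add_sum_filter_not (Finset.range (n+1) ×ˢ Finset.range (n+1))
    (fun p => p.1 + p.2 ≤ n) F]
  have hz : ∑ p ∈ (Finset.range (n+1) ×ˢ Finset.range (n+1)).filter
      (fun p => ¬ p.1 + p.2 ≤ n), F p = 0 := by
    refine Finset.sum_eq_zero fun p hp => ?_
    simp only [Finset.mem_filter, not_le] at hp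
    simp only [hF, coeff_mul_pow_eq_zero' ha hb hp.2, mul_zero]
  rw [hz, add_zero]
  refine Finset.sum_nbij' (fun x => x.2) (fun p => ⟨p.1 + p.2, p⟩) ?_ ?_ ?_ ?_ ?_
  · intro x hx
    simp only [Finset.mem_sigma, Finset.mem_range, Nat.lt_succ_iff,
      Finset.HasAntidiagonal.mem_antidiagonal] at hx
    simp only [Finset.mem_filter, Finset.mem_product, Finset.mem_range, Nat.lt_succ_iff]
    omega
  · intro p hp
    simp only [Finset.mem_filter, Finset.mem_product, Finset.mem_range, Nat.lt_succ_iff] at hp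
    simp only [Finset.mem_sigma, Finset.mem_range, Nat.lt_succ_iff, Finset.HasAntidiagonal.mem_antidiagonal]
    exact ⟨by omega, trivial⟩
  · intro x hx
    simp only [Finset.mem_sigma, Finset.HasAntidiagonal.mem_antidiagonal] at hx
    exact Sigma.ext (by simp [hx.2]) (by simp)
  · intro p hp; rfl
  · intro x hx; rfl

lemma expSubst_zero : expSubst (0 : PowerSeries R) = 1 := by
  ext n
  rw [expSubst, PowerSeries.coeff_mk]
  rw [Finset.sum_eq_single 0]
  · simp
  · intro j hj hj0
    rw [zero_pow hj0, map_zero, mul_zero]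
  · intro hn; simp at hn

lemma rescale_expSubst (r : R) (h : PowerSeries R) :
    PowerSeries.rescale r (expSubst h) = expSubst (PowerSeries.rescale r h) := by
  ext n
  rw [PowerSeries.coeff_rescale, expSubst, expSubst, PowerSeries.coeff_mk,
    PowerSeries.coeff_mk, Finset.mul_sum]
  refine Finset.sum_congr rfl fun j _ => ?_
  rw [← map_pow, PowerSeries.coeff_rescale]
  ring

lemma expSubst_sum {ι : Type*} (s : Finset ι) (g : ι → PowerSeries R)
    (hg : ∀ i ∈ s, PowerSeries.constantCoeff (g i) = 0) :
    expSubst (∑ i ∈ s, g i) = ∏ i ∈ s, expSubst (g i) := by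
  induction s using Finset.cons_induction with
  | empty => simpa using expSubst_zero
  | cons i s hi ih =>
    rw [Finset.sum_cons, Finset.prod_cons,
      expSubst_add _ _ (hg i (Finset.mem_cons_self i s)) (by
        rw [map_sum]
        exact Finset.sum_eq_zero fun j hj => hg j (Finset.mem_cons_of_mem hj)),
      ih fun j hj => hg j (Finset.mem_cons_of_mem hj)]


end Aux

/-- If `h` has zero constant coefficient, `f = exp(h)`, and
`b₁,…,b_k ∈ R` have power sums `p_n = ∑ᵢ bᵢⁿ`, then
`∏ᵢ f(bᵢX) = exp(H)` where `H` has zero constant coefficient and its `Xⁿ`-coefficient is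
`p_n·hₙ` for `n ≥ 1`. -/
theorem prod_rescale_expSubst {R : Type*} [CommRing R] [Algebra ℚ R]
    (h f : PowerSeries R) (h0 : PowerSeries.constantCoeff h = 0)
    (hf : f = expSubst h)
    (k : ℕ) (b : Fin k → R) (H : PowerSeries R)
    (hH : H = PowerSeries.mk fun n =>
      if n = 0 then 0 else (∑ i : Fin k, b i ^ n) * PowerSeries.coeff n h) :
    (∏ i : Fin k, PowerSeries.rescale (b i) f) = expSubst H := by

  have hHs : H = ∑ i : Fin k, PowerSeries.rescale (b i) h := by
    rw [hH]; ext n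
    rw [PowerSeries.coeff_mk, map_sum]
    simp only [PowerSeries.coeff_rescale]
    rcases eq_or_ne n 0 with rfl | hn
    · simp [PowerSeries.coeff_zero_eq_constantCoeff, h0]
    · rw [if_neg hn, Finset.sum_mul]
  subst hf hHs
  rw [expSubst_sum _ _ (fun i _ => by
    rw [← PowerSeries.coeff_zero_eq_constantCoeff_apply, PowerSeries.coeff_rescale,
      pow_zero, one_mul, PowerSeries.coeff_zero_eq_constantCoeff_apply, h0])]
  exact Finset.prod_congr rfl fun i _ => rescale_expSubst (b i) h
end

section
/- Let g ∈ ℚ[[X]] be the Todd series, i.e., the unique power series satisfying g·(exp(X) − 1) = X (formally g = X/(e^X − 1), with constant coefficient 1). Then g = exp(L), where L is the power series with zero constant coefficient whose coefficient of Xⁿ for n ≥ 1 equals −B'ₙ/(n·n!), and B'ₙ denotes the n-th Bernoulli number in the convention B'₁ = 1/2 (so B'ₙ equals the usual Bernoulli number Bₙ for all n ≠ 1). Equivalently, ln(X/(e^X − 1)) = −(1/2)X − (1/24)X² + (1/2880)X⁴ + ⋯ = −Σ_{n≥1} B'ₙ/(n·n!)·Xⁿ. -/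
open PowerSeries

namespace ToddAux

lemma coeff_pow_eq_zero {L : ℚ⟦X⟧} (hL0 : constantCoeff L = 0) {m k : ℕ} (h : m < k) :
    coeff m (L ^ k) = 0 := by
  have hdvd : (X : ℚ⟦X⟧) ^ k ∣ L ^ k := pow_dvd_pow_of_dvd (X_dvd_iff.mpr hL0) k
  exact (X_pow_dvd_iff.mp hdvd) m h

/-- Partial sums of the exponential of `L`. -/
noncomputable def S (L : ℚ⟦X⟧) (N : ℕ) : ℚ⟦X⟧ :=
  ∑ k ∈ Finset.range (N + 1), C (R := ℚ) (1 / k.factorial) * L ^ k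

lemma coeff_expSubst {L : ℚ⟦X⟧} (hL0 : constantCoeff L = 0) {m N : ℕ} (h : m ≤ N) :
    coeff m (expSubst L) = coeff m (S L N) := by
  simp only [expSubst, coeff_mk, S, map_sum, coeff_C_mul,
    Algebra.algebraMap_self, RingHom.id_apply]
  refine Finset.sum_subset (Finset.range_subset_range.mpr (by omega)) ?_
  intro k hk hk'
  simp only [Finset.mem_range, not_lt] at hk'
  rw [coeff_pow_eq_zero hL0 (by omega), mul_zero]

lemma derivative_S (L : ℚ⟦X⟧) (N : ℕ) :
    d⁄dX ℚ (S L (N + 1)) = d⁄dX ℚ L * S L N := by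
  rw [S, map_sum, Finset.sum_range_succ', S, Finset.mul_sum]
  have h0 : d⁄dX ℚ (C (1 / ((0:ℕ).factorial : ℚ)) * L ^ 0) = 0 := by
    rw [pow_zero, mul_one, derivative_C]
  rw [h0, add_zero]
  refine Finset.sum_congr rfl fun k _ => ?_
  rw [Derivation.leibniz, derivative_C, smul_zero, add_zero, Derivation.leibniz_pow]
  simp only [smul_eq_mul, nsmul_eq_mul, Nat.add_sub_cancel]
  have hfac : (1 / (((k + 1).factorial : ℚ))) * ((k:ℚ) + 1) = 1 / (k.factorial : ℚ) := by
    rw [Nat.factorial_succ]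
    have h1 : ((k:ℚ) + 1) ≠ 0 := by positivity
    have h2 : ((k.factorial : ℚ)) ≠ 0 := by exact_mod_cast k.factorial_ne_zero
    push_cast
    field_simp
  calc C (1 / ((k+1).factorial : ℚ)) * ((k + 1 : ℕ) * (L ^ k * d⁄dX ℚ L))
      = (C (1 / ((k+1).factorial : ℚ)) * C ((k:ℚ) + 1)) * (L ^ k * d⁄dX ℚ L) := by
        rw [← map_natCast C (k + 1)]; push_cast; ring
    _ = d⁄dX ℚ L * (C (1 / (k.factorial : ℚ)) * L ^ k) := by
        rw [← map_mul, hfac]; ring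

/-- Chain rule: the derivative of `exp(L)` is `L' · exp(L)`. -/
lemma derivative_expSubst {L : ℚ⟦X⟧} (hL0 : constantCoeff L = 0) :
    d⁄dX ℚ (expSubst L) = d⁄dX ℚ L * expSubst L := by
  ext n
  rw [coeff_derivative, coeff_expSubst hL0 (le_refl (n + 1)), ← coeff_derivative,
    derivative_S, coeff_mul, coeff_mul]
  refine Finset.sum_congr rfl fun p hp => ?_
  rw [Finset.HasAntidiagonal.mem_antidiagonal] at hp
  rw [coeff_expSubst hL0 (show p.2 ≤ n by omega)]

/-- Uniqueness of solutions of `f' = c·f` with given constant term. -/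
lemma ode_unique {f h c : ℚ⟦X⟧} (h0 : constantCoeff f = constantCoeff h)
    (hf : d⁄dX ℚ f = c * f) (hh : d⁄dX ℚ h = c * h) : f = h := by
  ext n
  induction n using Nat.strong_induction_on with
  | _ n ih =>
    match n with
    | 0 => simpa using h0
    | n + 1 =>
      have h1 : coeff (n + 1) f * (n + 1) = coeff (n + 1) h * (n + 1) := by
        rw [← coeff_derivative, ← coeff_derivative, hf, hh, coeff_mul, coeff_mul]
        refine Finset.sum_congr rfl fun p hp => ?_
        rw [Finset.HasAntidiagonal.mem_antidiagonal] at hp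
        rw [ih p.2 (by omega)]
      exact mul_right_cancel₀ (by exact_mod_cast Nat.succ_ne_zero n) h1

lemma derivative_exp : d⁄dX ℚ (exp ℚ) = exp ℚ := by
  ext n
  rw [coeff_derivative, coeff_exp, coeff_exp, Nat.factorial_succ]
  push_cast
  field_simp

end ToddAux

/-- The Todd series `g = X/(eˣ − 1)` (the unique power series with
`g·(exp(X) − 1) = X`) satisfies `g = exp(L)` where `L = −∑_{n≥1} B'ₙ/(n·n!) Xⁿ`, with `B'ₙ`
the Bernoulli numbers in the convention `B'₁ = 1/2` (Mathlib's `bernoulli'`). -/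
theorem todd_series_eq_exp_bernoulli (g L : PowerSeries ℚ)
    (hg : g * (PowerSeries.exp ℚ - 1) = PowerSeries.X)
    (hL : L = PowerSeries.mk fun n =>
      if n = 0 then 0 else -(bernoulli' n) / (n * n.factorial)) :
    g = expSubst L := by
  classical
  have hL0 : constantCoeff L = 0 := by
    rw [hL, ← coeff_zero_eq_constantCoeff_apply, coeff_mk]; simp
  set B := bernoulliPowerSeries ℚ with hBdef
  have hB : B * (exp ℚ - 1) = X := bernoulliPowerSeries_mul_exp_sub_one ℚ
  have hB' : bernoulli'PowerSeries ℚ * (exp ℚ - 1) = X * exp ℚ :=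
    bernoulli'PowerSeries_mul_exp_sub_one ℚ
  -- Key coefficient identity: X·L' = 1 − B'(X)
  have hK3 : X * d⁄dX ℚ L = 1 - bernoulli'PowerSeries ℚ := by
    ext n
    cases n with
    | zero =>
      simp [bernoulli'PowerSeries, coeff_zero_eq_constantCoeff_apply]
    | succ n =>
      rw [coeff_succ_X_mul, coeff_derivative, hL, coeff_mk]
      simp only [Nat.succ_ne_zero, if_false, map_sub, bernoulli'PowerSeries, coeff_mk,
        coeff_one, Nat.succ_ne_zero, if_false, Algebra.algebraMap_self, RingHom.id_apply, Rat.cast_id]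
      have h1 : ((n : ℚ) + 1) ≠ 0 := by positivity
      have h2 : ((n + 1).factorial : ℚ) ≠ 0 := by exact_mod_cast (n + 1).factorial_ne_zero
      push_cast
      field_simp
      ring
  -- exp ℚ - 1 is nonzero
  have hne : (exp ℚ - 1 : ℚ⟦X⟧) ≠ 0 := fun h => by
    have := congrArg (coeff 1) h
    simp [coeff_exp] at this
  have hXne : (X : ℚ⟦X⟧) ≠ 0 := X_ne_zero
  -- derivative of B equals L' * B
  have hd1 : d⁄dX ℚ (exp ℚ - 1) = exp ℚ := by
    rw [map_sub, ToddAux.derivative_exp, Derivation.map_one_eq_zero, sub_zero]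
  have hdB : d⁄dX ℚ B = d⁄dX ℚ L * B := by
    have hdiff : d⁄dX ℚ B * (exp ℚ - 1) + B * exp ℚ = 1 := by
      have h := congrArg (d⁄dX ℚ) hB
      rw [Derivation.leibniz, hd1, derivative_X, smul_eq_mul, smul_eq_mul] at h
      linear_combination h
    have key : (X * (exp ℚ - 1)) * (d⁄dX ℚ B) = (X * (exp ℚ - 1)) * (d⁄dX ℚ L * B) := by
      have e1 : (X * (exp ℚ - 1)) * d⁄dX ℚ B = X - X * (B * exp ℚ) := by
        linear_combination X * hdiff
      have e2 : (X * (exp ℚ - 1)) * (d⁄dX ℚ L * B) = X - X * (B * exp ℚ) := by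
        have h3 : (X * (exp ℚ - 1)) * (d⁄dX ℚ L * B)
            = (1 - bernoulli'PowerSeries ℚ) * (B * (exp ℚ - 1)) := by
          rw [← hK3]; ring
        rw [h3, hB]
        linear_combination bernoulli'PowerSeries ℚ * hB - B * hB'
      rw [e1, e2]
    exact mul_left_cancel₀ (mul_ne_zero hXne hne) key
  have hdE : d⁄dX ℚ (expSubst L) = d⁄dX ℚ L * expSubst L := ToddAux.derivative_expSubst hL0
  have h0 : constantCoeff B = constantCoeff (expSubst L) := by
    rw [← coeff_zero_eq_constantCoeff_apply, ← coeff_zero_eq_constantCoeff_apply]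
    simp [hBdef, bernoulliPowerSeries, expSubst, coeff_mk]
  have hBE : B = expSubst L := ToddAux.ode_unique h0 hdB hdE
  have : g * (exp ℚ - 1) = B * (exp ℚ - 1) := by rw [hg, hB]
  rw [mul_right_cancel₀ hne this, hBE]
end

section
/- In the ring of formal power series in X over the polynomial ring ℚ[y], let u = 1 − y·(exp(X) − 1), where exp(X) − 1 is viewed with coefficients in ℚ[y]. Then u has constant coefficient 1, hence is a unit, and its inverse u⁻¹ = Σ Fₙ(y) Xⁿ is regular in y: for every n, the polynomial Fₙ(y) has degree at most n, and for n ≥ 1 it has zero constant term (Fₙ(0) = 0), while F₀ = 1. -/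
open PowerSeries Finset

/-- In `ℚ[y][[X]]`, let `u = 1 − y·(exp(X) − 1)`.  Then `u` has constant
coefficient `1`, hence is a unit, and its inverse `u⁻¹ = ∑ Fₙ(y) Xⁿ` is regular in `y`:
`F₀ = 1`, `deg Fₙ ≤ n` for all `n`, and `Fₙ(0) = 0` for `n ≥ 1`. -/
theorem inverse_one_sub_y_exp_regular (u : PowerSeries (Polynomial ℚ))
    (hu : u = 1 - PowerSeries.C (R := Polynomial ℚ) Polynomial.X *
      (PowerSeries.exp (Polynomial ℚ) - 1)) :
    PowerSeries.constantCoeff (R := Polynomial ℚ) u = 1 ∧ IsUnit u ∧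
      PowerSeries.coeff (R := Polynomial ℚ) 0 (Ring.inverse u) = 1 ∧
      (∀ n : ℕ, (PowerSeries.coeff (R := Polynomial ℚ) n (Ring.inverse u)).natDegree ≤ n) ∧
      (∀ n : ℕ, 1 ≤ n →
        (PowerSeries.coeff (R := Polynomial ℚ) n (Ring.inverse u)).coeff 0 = 0) := by
  have hcc : PowerSeries.constantCoeff (R := Polynomial ℚ) u = 1 := by
    simp [hu, PowerSeries.constantCoeff_exp]
  have hunit : IsUnit u := PowerSeries.isUnit_iff_constantCoeff.mpr (by simp [hcc])
  have hmul : u * Ring.inverse u = 1 := Ring.mul_inverse_cancel u hunit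
  set F : ℕ → Polynomial ℚ := fun n => PowerSeries.coeff (R := Polynomial ℚ) n (Ring.inverse u)
    with hF
  have hc0 : PowerSeries.coeff (R := Polynomial ℚ) 0 u = 1 := by
    simpa using hcc
  have hc : ∀ i : ℕ, PowerSeries.coeff (R := Polynomial ℚ) (i + 1) u
      = -(Polynomial.X * Polynomial.C ((1 : ℚ) / (Nat.factorial (i+1)))) := by
    intro i
    simp [hu, PowerSeries.coeff_exp, PowerSeries.coeff_one, Polynomial.algebraMap_eq]
  have hF0 : F 0 = 1 := by
    have := congrArg (PowerSeries.coeff (R := Polynomial ℚ) 0) hmul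
    show PowerSeries.coeff (R := Polynomial ℚ) 0 (Ring.inverse u) = 1
    rw [PowerSeries.coeff_zero_eq_constantCoeff]
    simpa [hcc] using this
  have hrec : ∀ n : ℕ, F (n + 1)
      = ∑ i ∈ Finset.range (n + 1), Polynomial.X * Polynomial.C ((1 : ℚ) / (Nat.factorial (i+1))) * F (n - i) := by
    intro n
    have := congrArg (PowerSeries.coeff (R := Polynomial ℚ) (n + 1)) hmul
    rw [PowerSeries.coeff_mul, Finset.Nat.sum_antidiagonal_eq_sum_range_succ_mk,
      Finset.sum_range_succ', PowerSeries.coeff_one] at this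
    simp only [hc, hc0, one_mul, Nat.add_sub_cancel_left, if_neg (Nat.succ_ne_zero n)] at this
    have h2 : F (n + 1) = -∑ i ∈ Finset.range (n + 1),
        -(Polynomial.X * Polynomial.C ((1 : ℚ) / (Nat.factorial (i+1)))) * F (n + 1 - (i + 1)) := by
      show PowerSeries.coeff (R := Polynomial ℚ) (n+1) (Ring.inverse u) = _
      simp only [Nat.sub_zero] at this
      linear_combination this
    rw [h2, ← Finset.sum_neg_distrib]
    refine Finset.sum_congr rfl fun i _ => ?_
    rw [Nat.succ_sub_succ]
    ring
  have hdeg : ∀ n, (F n).natDegree ≤ n := by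
    intro n
    induction n using Nat.strong_induction_on with
    | _ n ih =>
      match n with
      | 0 => simp [hF0]
      | (m + 1) =>
        rw [hrec m]
        refine (Polynomial.natDegree_sum_le_of_forall_le _ _ ?_)
        intro i hi
        calc (Polynomial.X * Polynomial.C ((1 : ℚ) / (Nat.factorial (i+1))) * F (m - i)).natDegree
            ≤ (Polynomial.X * Polynomial.C ((1 : ℚ) / (Nat.factorial (i+1)))).natDegree + (F (m - i)).natDegree :=
              Polynomial.natDegree_mul_le
          _ ≤ 1 + (m - i) := by
              gcongr
              · exact (Polynomial.natDegree_mul_le).trans (by simp)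
              · exact ih _ (by omega)
          _ ≤ m + 1 := by omega
  have hzero : ∀ n, 1 ≤ n → (F n).coeff 0 = 0 := by
    intro n hn
    match n, hn with
    | (m + 1), _ =>
      rw [hrec m, Polynomial.finset_sum_coeff]
      refine Finset.sum_eq_zero fun i _ => ?_
      rw [mul_assoc, Polynomial.coeff_X_mul_zero]
  exact ⟨hcc, hunit, hF0, hdeg, hzero⟩
end

section
/- Let B and B̄ be finite multisets (lists) of nonzero rational numbers, let g ∈ ℚ[[X]] be the Todd series (the unique power series with g·(exp(X) − 1) = X), and set a = (Σ_{b∈B} b − Σ_{b∈B̄} b)/2. Define F = exp(aX) · ∏_{b∈B} g(bX) · (∏_{b∈B̄} g(bX))⁻¹ ∈ ℚ[[X]], where g(bX) denotes rescaling X by b (each g(bX) has constant coefficient 1, so the inverse exists). Then F is an even power series: the coefficient of Xⁿ in F is 0 for every odd n; equivalently F(−X) = F(X). (In particular the generalized Todd polynomials td_n(a, B, B̄) vanish for all odd n.) -/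
open PowerSeries

private lemma ringInverse_eq_of_mul_eq_one {M₀ : Type*} [CommMonoidWithZero M₀] {a b : M₀}
    (h : a * b = 1) : Ring.inverse a = b := by
  have := Ring.inverse_unit (Units.mkOfMulEqOne a b h)
  exact this

private lemma map_ringInverse {R S : Type*} [CommRing R] [CommRing S] (f : R →+* S) {x : R}
    (h : IsUnit x) : f (Ring.inverse x) = Ring.inverse (f x) := by
  obtain ⟨u, rfl⟩ := h
  rw [Ring.inverse_unit]
  symm
  apply ringInverse_eq_of_mul_eq_one
  rw [← map_mul, Units.mul_inv, map_one]

private lemma prod_rescale_exp (B : Multiset ℚ) :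
    (B.map fun b => PowerSeries.rescale b (PowerSeries.exp ℚ)).prod =
      PowerSeries.rescale B.sum (PowerSeries.exp ℚ) := by
  induction B using Multiset.induction with
  | empty => simp [rescale_zero, constantCoeff_exp]
  | cons c B ih =>
      simp only [Multiset.map_cons, Multiset.prod_cons, Multiset.sum_cons, ih,
        exp_mul_exp_eq_exp_add]

/-- Let `B`, `B̄` be finite multisets of nonzero rationals, `g` the Todd
series (`g·(exp(X) − 1) = X`), and `a = (∑_{b∈B} b − ∑_{b∈B̄} b)/2`.  Then
`F = exp(aX)·∏_{b∈B} g(bX)·(∏_{b∈B̄} g(bX))⁻¹` is an even power series: its odd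
coefficients vanish; equivalently `F(−X) = F(X)`. -/
theorem generalized_todd_even (B Bbar : Multiset ℚ)
    (hB : ∀ b ∈ B, b ≠ 0) (hBbar : ∀ b ∈ Bbar, b ≠ 0)
    (g : PowerSeries ℚ) (hg : g * (PowerSeries.exp ℚ - 1) = PowerSeries.X)
    (a : ℚ) (ha : a = (B.sum - Bbar.sum) / 2)
    (F : PowerSeries ℚ)
    (hF : F = PowerSeries.rescale a (PowerSeries.exp ℚ) *
        (B.map fun b => PowerSeries.rescale b g).prod *
        Ring.inverse ((Bbar.map fun b => PowerSeries.rescale b g).prod)) :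
    (∀ n : ℕ, Odd n → PowerSeries.coeff n F = 0) ∧
      PowerSeries.rescale (-1) F = F := by
  -- constant coefficient of g is 1
  have hg0 : constantCoeff g = 1 := by
    have h1 := congrArg (coeff 1) hg
    rw [coeff_mul] at h1
    simp [Finset.Nat.sum_antidiagonal_eq_sum_range_succ_mk, Finset.sum_range_succ,
      coeff_exp] at h1
    linarith
  -- key identity : g(-X) = g(X)·exp(X)
  have key : rescale (-1 : ℚ) g = g * exp ℚ := by
    have hne : rescale (-1 : ℚ) (exp ℚ) - 1 ≠ 0 := by
      intro h
      have := congrArg (coeff 1) h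
      simp [coeff_rescale, coeff_exp, coeff_one] at this
    have h1 : rescale (-1 : ℚ) g * (rescale (-1 : ℚ) (exp ℚ) - 1) = -X := by
      have := congrArg (rescale (-1 : ℚ)) hg
      rw [map_mul, map_sub, map_one, rescale_neg_one_X] at this
      exact this
    have h2 : (g * exp ℚ) * (rescale (-1 : ℚ) (exp ℚ) - 1) = -X := by
      have hexp : exp ℚ * rescale (-1 : ℚ) (exp ℚ) = 1 := exp_mul_exp_neg_eq_one
      calc (g * exp ℚ) * (rescale (-1 : ℚ) (exp ℚ) - 1)
          = g * (exp ℚ * rescale (-1 : ℚ) (exp ℚ)) - g * exp ℚ := by ring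
        _ = g * 1 - g * exp ℚ := by rw [hexp]
        _ = -(g * (exp ℚ - 1)) := by ring
        _ = -X := by rw [hg]
    exact mul_right_cancel₀ hne (h1.trans h2.symm)
  -- rescaled versions of the key identity
  have key' : ∀ b : ℚ, rescale (-b) g = rescale b g * rescale b (exp ℚ) := by
    intro b
    rw [show (-b : ℚ) = -1 * b by ring, ← rescale_rescale, key, map_mul]
  set u := (B.map fun b => PowerSeries.rescale b g).prod with hu
  set v := (Bbar.map fun b => PowerSeries.rescale b g).prod with hv
  -- v is a unit
  have hvunit : IsUnit v := by
    rw [PowerSeries.isUnit_iff_constantCoeff]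
    have : constantCoeff v = 1 := by
      rw [hv, map_multiset_prod, Multiset.map_map]
      have hc : ∀ b : ℚ, constantCoeff (rescale b g) = 1 := by
        intro b
        rw [← PowerSeries.coeff_zero_eq_constantCoeff_apply, coeff_rescale, pow_zero, one_mul,
          PowerSeries.coeff_zero_eq_constantCoeff_apply, hg0]
      rw [show (Multiset.map (⇑constantCoeff ∘ fun b => rescale b g) Bbar) =
          Bbar.map (fun _ => (1 : ℚ)) from Multiset.map_congr rfl (fun b _ => hc b)]
      simp
    rw [this]
    exact isUnit_one
  -- rescale (-1) of the products
  have hresc : ∀ M : Multiset ℚ,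
      rescale (-1 : ℚ) (M.map fun b => PowerSeries.rescale b g).prod =
        (M.map fun b => PowerSeries.rescale b g).prod * rescale M.sum (exp ℚ) := by
    intro M
    rw [map_multiset_prod, Multiset.map_map]
    have : ∀ b ∈ M, (rescale (-1 : ℚ) ∘ fun b => rescale b g) b =
        rescale b g * rescale b (exp ℚ) := by
      intro b _
      simp only [Function.comp_apply]
      rw [rescale_rescale]
      have := key' b
      rw [show b * (-1 : ℚ) = -b by ring]
      exact this
    rw [Multiset.map_congr rfl this, Multiset.prod_map_mul, prod_rescale_exp]
  -- inverse of rescaled exp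
  have hinvexp : ∀ c : ℚ, Ring.inverse (rescale c (exp ℚ)) = rescale (-c) (exp ℚ) := by
    intro c
    apply ringInverse_eq_of_mul_eq_one
    rw [exp_mul_exp_eq_exp_add, add_neg_cancel, rescale_zero]
    simp [constantCoeff_exp]
  -- main computation
  have main : rescale (-1 : ℚ) F = F := by
    rw [hF, map_mul, map_mul, map_ringInverse _ hvunit, hresc, hresc,
      rescale_rescale, Ring.mul_inverse_rev, hinvexp]
    have hvinv : IsUnit (Ring.inverse v) := hvunit.ringInverse
    have hsum : -Bbar.sum + (a * -1 + B.sum) = a := by rw [ha]; ring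
    calc rescale (a * -1) (exp ℚ) * (u * rescale B.sum (exp ℚ)) *
          (rescale (-Bbar.sum) (exp ℚ) * Ring.inverse v)
        = rescale (-Bbar.sum) (exp ℚ) * (rescale (a * -1) (exp ℚ) * rescale B.sum (exp ℚ)) *
          u * Ring.inverse v := by ring
      _ = rescale (-Bbar.sum) (exp ℚ) * rescale (a * -1 + B.sum) (exp ℚ) *
          u * Ring.inverse v := by rw [exp_mul_exp_eq_exp_add]
      _ = rescale (-Bbar.sum + (a * -1 + B.sum)) (exp ℚ) * u * Ring.inverse v := by
            rw [exp_mul_exp_eq_exp_add]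
      _ = rescale a (exp ℚ) * u * Ring.inverse v := by rw [hsum]
  refine ⟨?_, main⟩
  intro n hn
  have := congrArg (coeff n) main
  rw [coeff_rescale, hn.neg_one_pow] at this
  linarith
end

section
/- For every natural number n, the following identity holds in the field of formal Laurent series ℚ((s)): the coefficient of s⁰ in 1/(1 − e^s)² + 2·e^{ns}/((1 − e^{−s})(1 − e^s)) + e^{2ns}/(1 − e^{−s})² equals (n+1)². Here e^{cs} denotes the image in ℚ((s)) of the rescaled exponential power series exp(cs), and the displayed inverses exist because 1 − e^{±s} are nonzero elements of the field ℚ((s)). (This computes the number of lattice points in the n-th dilate of the unit square via Brion's decomposition.) -/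
noncomputable def expLaurent (c : ℚ) : LaurentSeries ℚ :=
  (HahnSeries.ofPowerSeries ℤ ℚ) (PowerSeries.rescale c (PowerSeries.exp ℚ))

lemma expLaurent_mul (a b : ℚ) : expLaurent a * expLaurent b = expLaurent (a + b) := by
  simp only [expLaurent, ← map_mul, PowerSeries.exp_mul_exp_eq_exp_add]

lemma expLaurent_zero : expLaurent 0 = 1 := by
  simp [expLaurent, PowerSeries.rescale_zero]

lemma expLaurent_nat (k : ℕ) : expLaurent k = (expLaurent 1) ^ k := by
  induction k with
  | zero => simpa using expLaurent_zero
  | succ m ih => rw [pow_succ, ← ih, expLaurent_mul]; norm_num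

lemma expLaurent_ne_one (c : ℚ) (hc : c ≠ 0) : 1 - expLaurent c ≠ 0 := by
  intro h
  have h1 : (1 - expLaurent c).coeff (1 : ℤ) = 0 := by rw [h]; simp
  rw [HahnSeries.coeff_sub] at h1
  have : (expLaurent c).coeff ((1:ℕ) : ℤ) = c := by
    rw [expLaurent, HahnSeries.ofPowerSeries_apply_coeff, PowerSeries.coeff_rescale,
      PowerSeries.coeff_exp]
    simp
  rw [show ((1:ℕ):ℤ) = (1:ℤ) by norm_num] at this
  rw [this] at h1
  have h2 : (1 : LaurentSeries ℚ).coeff (1:ℤ) = 0 := by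
    rw [HahnSeries.coeff_one]; norm_num
  rw [h2] at h1
  exact hc (by linarith)

lemma expLaurent_ne_zero : expLaurent 1 ≠ 0 := by
  intro h
  have := expLaurent_mul 1 (-1)
  rw [h, zero_mul] at this
  simp only [add_neg_cancel, expLaurent_zero] at this
  exact one_ne_zero this.symm

/-- In the field `ℚ((s))`, for every natural number `n`, the coefficient of
`s⁰` in `1/(1 − e^s)² + 2 e^{ns}/((1 − e^{−s})(1 − e^s)) + e^{2ns}/(1 − e^{−s})²` equals
`(n+1)²` (the number of lattice points in the `n`-th dilate of the unit square). -/
theorem lattice_count_unit_square (n : ℕ) :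
    HahnSeries.coeff
        (((1 - expLaurent 1) ^ 2)⁻¹ +
          2 * expLaurent n * ((1 - expLaurent (-1)) * (1 - expLaurent 1))⁻¹ +
          expLaurent (2 * n) * ((1 - expLaurent (-1)) ^ 2)⁻¹) 0 =
      ((n : ℚ) + 1) ^ 2 := by
  set u := expLaurent 1 with hu
  have h0 : u ≠ 0 := expLaurent_ne_zero
  have h1 : (1 : LaurentSeries ℚ) - u ≠ 0 := expLaurent_ne_one 1 one_ne_zero
  have hv : expLaurent (-1) = u⁻¹ := by
    have h := expLaurent_mul 1 (-1)
    rw [add_neg_cancel, expLaurent_zero] at h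
    field_simp [← h, hu]
    rw [mul_comm]; exact h
  have h2 : (1 : LaurentSeries ℚ) - u⁻¹ ≠ 0 := by
    rw [← hv]; exact expLaurent_ne_one (-1) (by norm_num)
  -- geometric sum
  set g : LaurentSeries ℚ := ∑ k ∈ Finset.range (n + 1), expLaurent k with hg
  have hgu : g = ∑ k ∈ Finset.range (n + 1), u ^ k := by
    rw [hg]; exact Finset.sum_congr rfl fun k _ => expLaurent_nat k
  have hgeom : g * (u - 1) = u ^ (n + 1) - 1 := by
    rw [hgu]; exact geom_sum_mul u (n + 1)
  have key : ((1 - u) ^ 2)⁻¹ +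
      2 * expLaurent n * ((1 - expLaurent (-1)) * (1 - u))⁻¹ +
      expLaurent (2 * n) * ((1 - expLaurent (-1)) ^ 2)⁻¹ = g ^ 2 := by
    rw [hv, expLaurent_nat n]
    rw [show expLaurent (2 * (n:ℚ)) = u ^ (2 * n) by
      rw [show ((2:ℚ) * (n:ℚ)) = ((2 * n : ℕ) : ℚ) by push_cast; ring]; exact expLaurent_nat (2*n)]
    set w : LaurentSeries ℚ := (1 - u)⁻¹ with hwdef
    have hw : (1 - u) * w = 1 := mul_inv_cancel₀ h1
    have hi : u⁻¹ * u = 1 := inv_mul_cancel₀ h0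
    have a1 : ((1 - u) ^ 2)⁻¹ = w ^ 2 := by rw [hwdef, inv_pow]
    have a2 : ((1 - u⁻¹) * (1 - u))⁻¹ = -u * w ^ 2 := by
      apply inv_eq_of_mul_eq_one_right
      calc (1 - u⁻¹) * (1 - u) * (-u * w ^ 2)
          = (u⁻¹ * u - u) * (1 - u) * w ^ 2 := by ring
        _ = (1 - u) * (1 - u) * w ^ 2 := by rw [hi]
        _ = ((1 - u) * w) ^ 2 := by ring
        _ = 1 := by rw [hw]; exact one_pow 2
    have a3 : ((1 - u⁻¹) ^ 2)⁻¹ = u ^ 2 * w ^ 2 := by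
      apply inv_eq_of_mul_eq_one_right
      have e : (1 - u⁻¹) * u = u - 1 := by linear_combination -hi
      calc (1 - u⁻¹) ^ 2 * (u ^ 2 * w ^ 2) = ((1 - u⁻¹) * u) ^ 2 * w ^ 2 := by ring
        _ = ((1 - u) * w) ^ 2 := by rw [e]; ring
        _ = 1 := by rw [hw]; ring
    rw [a1, a2, a3]
    have e1 : 1 - u ^ (n + 1) = g * (1 - u) := by linear_combination hgeom
    calc w ^ 2 + 2 * u ^ n * (-u * w ^ 2) + u ^ (2 * n) * (u ^ 2 * w ^ 2)
        = (1 - u ^ (n + 1)) ^ 2 * w ^ 2 := by ring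
      _ = g ^ 2 * ((1 - u) * w) ^ 2 := by rw [e1]; ring
      _ = g ^ 2 := by rw [hw]; ring
  rw [key, hgu]
  -- coefficient of g^2 at 0
  have : (∑ k ∈ Finset.range (n + 1), u ^ k) ^ 2 =
      (HahnSeries.ofPowerSeries ℤ ℚ)
        ((∑ k ∈ Finset.range (n + 1), PowerSeries.rescale (1:ℚ) (PowerSeries.exp ℚ) ^ k) ^ 2) := by
    rw [map_pow, map_sum]
    congr 1
    refine Finset.sum_congr rfl fun k _ => ?_
    rw [hu, expLaurent, map_pow]
  rw [this, show (0:ℤ) = ((0:ℕ):ℤ) from rfl, HahnSeries.ofPowerSeries_apply_coeff]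
  have hc : (PowerSeries.constantCoeff (R := ℚ))
      ((∑ k ∈ Finset.range (n + 1), PowerSeries.rescale (1:ℚ) (PowerSeries.exp ℚ) ^ k) ^ 2)
      = ((n : ℚ) + 1) ^ 2 := by
    rw [map_pow, map_sum]
    have : ∀ k, (PowerSeries.constantCoeff (R := ℚ))
        (PowerSeries.rescale (1:ℚ) (PowerSeries.exp ℚ) ^ k) = 1 := by
      intro k
      rw [map_pow]
      rw [← PowerSeries.coeff_zero_eq_constantCoeff, PowerSeries.coeff_rescale,
        PowerSeries.coeff_exp]
      norm_num
    simp [this]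
  rw [← hc, PowerSeries.coeff_zero_eq_constantCoeff]
end
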